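/- If g, h : A → X are homotopic maps and i : A → B is a cofibration, then the pushouts B ∪_g X and B ∪_h X are homotopy equivalent. -/

import Mathlib

open scoped unitInterval ContinuousMap Topology

noncomputable section

/-- `Sph d` is the unit sphere `S^{d-1} ⊆ ℝ^d`. -/
abbrev Sph (d : ℕ) : Type := Metric.sphere (0 : EuclideanSpace ℝ (Fin d)) 1

/-- `Disc d` is the closed unit disc `D^d ⊆ ℝ^d`. -/
abbrev Disc (d : ℕ) : Type := Metric.closedBall (0 : EuclideanSpace ℝ (Fin d)) 1

/-- The special orthogonal group with index type `ι`. -/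
abbrev SOg (ι : Type) [Fintype ι] [DecidableEq ι] : Type :=
  Matrix.specialOrthogonalGroup ι ℝ

/-- `SO n`, the special orthogonal group of `n × n` real matrices. -/
abbrev SO (n : ℕ) : Type := SOg (Fin n)

/-- Reinterpret a plain function `ι → ℝ` as an element of Euclidean space. -/
abbrev toE {ι : Type} (v : ι → ℝ) : EuclideanSpace ℝ ι := WithLp.toLp 2 v

theorem mulVec_norm {ι : Type} [Fintype ι] [DecidableEq ι] (A : SOg ι)
    (v : EuclideanSpace ℝ ι) : ‖toE (A.1.mulVec v)‖ = ‖v‖ := by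
  have key : ∀ w : EuclideanSpace ℝ ι, ‖w‖ ^ 2 = dotProduct w.ofLp w.ofLp := by
    intro w
    rw [EuclideanSpace.norm_sq_eq]
    simp [dotProduct, Real.norm_eq_abs, sq]
  have hA : Matrix.transpose A.1 * A.1 = 1 := by
    have h := (Matrix.mem_specialOrthogonalGroup_iff.mp A.2).1
    rw [Matrix.mem_orthogonalGroup_iff'] at h
    simpa using h
  have h2 : dotProduct (A.1.mulVec v) (A.1.mulVec v) = dotProduct v.ofLp v.ofLp := by
    rw [Matrix.dotProduct_mulVec, ← Matrix.mulVec_transpose, Matrix.mulVec_mulVec, hA,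
      Matrix.one_mulVec]
  have k1 := key (toE (A.1.mulVec v))
  rw [show dotProduct (toE (A.1.mulVec v)).ofLp (toE (A.1.mulVec v)).ofLp
      = dotProduct (A.1.mulVec v) (A.1.mulVec v) from rfl, h2, ← key v] at k1
  have := norm_nonneg (toE (A.1.mulVec v))
  have := norm_nonneg v
  nlinarith

/-- The standard linear action of the special orthogonal group on the unit sphere. -/
def sAct {ι : Type} [Fintype ι] [DecidableEq ι] (A : SOg ι)
    (v : Metric.sphere (0 : EuclideanSpace ℝ ι) 1) :
    Metric.sphere (0 : EuclideanSpace ℝ ι) 1 :=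
  ⟨toE (A.1.mulVec v.1),
    mem_sphere_zero_iff_norm.mpr
      ((mulVec_norm A v.1).trans (mem_sphere_zero_iff_norm.mp v.2))⟩

theorem sAct_continuous {ι : Type} [Fintype ι] [DecidableEq ι] :
    Continuous fun p : SOg ι × Metric.sphere (0 : EuclideanSpace ℝ ι) 1 => sAct p.1 p.2 := by
  apply Continuous.subtype_mk
  exact (PiLp.continuous_toLp 2 _).comp (Continuous.matrix_mulVec
    (continuous_subtype_val.comp continuous_fst)
    ((PiLp.continuous_ofLp 2 _).comp (continuous_subtype_val.comp continuous_snd)))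

/-- The action of a fixed element of `SO(n)` on the sphere, as a continuous map. -/
def sActMap {ι : Type} [Fintype ι] [DecidableEq ι] (A : SOg ι) :
    C(Metric.sphere (0 : EuclideanSpace ℝ ι) 1, Metric.sphere (0 : EuclideanSpace ℝ ι) 1) :=
  ⟨fun v => sAct A v, sAct_continuous.comp (Continuous.prodMk continuous_const continuous_id)⟩

/-- The inclusion of the sphere `S^{d-1}` as the boundary of the disc `D^d`. -/
def sphereToDisc (d : ℕ) : C(Sph d, Disc d) :=
  ⟨fun a => ⟨a.1, Metric.sphere_subset_closedBall a.2⟩,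
    Continuous.subtype_mk continuous_subtype_val _⟩

/-- The pushout (adjunction space) of two maps `f : A → X` and `g : A → B`,
as a quotient of the disjoint union of `X` and `B`. -/
abbrev Pushout {A X B : Type} [TopologicalSpace X] [TopologicalSpace B]
    (f : A → X) (g : A → B) : Type :=
  Quot (fun z w : X ⊕ B => ∃ a : A, z = Sum.inl (f a) ∧ w = Sum.inr (g a))

/-- The canonical map from `X` into the pushout. -/
def Pushout.inl {A X B : Type} [TopologicalSpace X] [TopologicalSpace B]
    (f : A → X) (g : A → B) (x : X) : Pushout f g :=
  Quot.mk _ (Sum.inl x)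

/-- The canonical map from `B` into the pushout. -/
def Pushout.inr {A X B : Type} [TopologicalSpace X] [TopologicalSpace B]
    (f : A → X) (g : A → B) (b : B) : Pushout f g :=
  Quot.mk _ (Sum.inr b)

/-- The twisting self-map `t(a, x) = (τ(x) · a, x)` of `S^{n-1} × S^{k-1}`. -/
def tMap (n k : ℕ) (τ : C(Sph k, SO n)) : C(Sph n × Sph k, Sph n × Sph k) :=
  ⟨fun p => (sAct (τ p.2) p.1, p.2),
    Continuous.prodMk
      (sAct_continuous.comp
        (Continuous.prodMk (τ.continuous.comp continuous_snd) continuous_fst))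
      continuous_snd⟩

/-- The gyration `G^k_τ` of a complex with top-cell attaching map `f : S^{n-1} → X`:
the pushout of `(f × 1) ∘ t : S^{n-1} × S^{k-1} → X × S^{k-1}` along the inclusion
`S^{n-1} × S^{k-1} → S^{n-1} × D^k`. -/
abbrev gyr (n k : ℕ) {X : Type} [TopologicalSpace X] (f : C(Sph n, X))
    (τ : C(Sph k, SO n)) : Type :=
  Pushout (⇑((f.prodMap (ContinuousMap.id (Sph k))).comp (tMap n k τ)))
    (fun p : Sph n × Sph k => (p.1, sphereToDisc k p.2))

/-- Gyration stability: all `k`-gyrations have the same homotopy type. -/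
def GStable (n k : ℕ) {X : Type} [TopologicalSpace X] (f : C(Sph n, X)) : Prop :=
  ∀ τ ω : C(Sph k, SO n), Nonempty ((gyr n k f τ) ≃ₕ (gyr n k f ω))

/-- The mapping cone of `f : S^{n-1} → X`, i.e. `X` with an `n`-cell attached along `f`. -/
abbrev mapCone (n : ℕ) {X : Type} [TopologicalSpace X] (f : C(Sph n, X)) : Type :=
  Pushout (⇑f) (⇑(sphereToDisc n))

/-- A map `i : A → B` is a cofibration if it has the homotopy extension property with
respect to every space. -/
def IsCofibration {A B : Type} [TopologicalSpace A] [TopologicalSpace B]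
    (i : C(A, B)) : Prop :=
  ∀ (Y : Type) [TopologicalSpace Y] (g : C(B, Y)) (H : C(A × I, Y)),
    (∀ a, H (a, 0) = g (i a)) →
    ∃ K : C(B × I, Y), (∀ b, K (b, 0) = g b) ∧ ∀ a t, K (i a, t) = H (a, t)

/-- The relation generating the join `A * B`: collapse `A × B × {1}` along `B` and
`A × B × {0}` along `A`. -/
inductive JoinRel (A B : Type) : A × B × I → A × B × I → Prop
  | top (a : A) (b b' : B) : JoinRel A B (a, b, 1) (a, b', 1)
  | bot (a a' : A) (b : B) : JoinRel A B (a, b, 0) (a', b, 0)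

/-- The join `A * B` of two spaces. -/
abbrev Join (A B : Type) [TopologicalSpace A] [TopologicalSpace B] : Type :=
  Quot (JoinRel A B)

/-- The block inclusion `SO(ι) → SO(ι ⊕ κ)`, `A ↦ A ⊕ I`. -/
def blockIncl (ι κ : Type) [Fintype ι] [DecidableEq ι] [Fintype κ] [DecidableEq κ]
    (A : SOg ι) : SOg (ι ⊕ κ) :=
  ⟨Matrix.fromBlocks A.1 0 0 1, by
    obtain ⟨hO, hdet⟩ := Matrix.mem_specialOrthogonalGroup_iff.mp A.2
    rw [Matrix.mem_orthogonalGroup_iff] at hO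
    rw [Matrix.mem_specialOrthogonalGroup_iff]
    constructor
    · rw [Matrix.mem_orthogonalGroup_iff]
      have : star (Matrix.fromBlocks A.1 0 0 (1 : Matrix κ κ ℝ))
          = Matrix.fromBlocks (star A.1) 0 0 1 := by
        simp [Matrix.star_eq_conjTranspose, Matrix.fromBlocks_conjTranspose, Matrix.fromBlocks_transpose]
      rw [Matrix.fromBlocks_transpose, Matrix.fromBlocks_multiply]
      simp [hO, Matrix.fromBlocks_one]
    · rw [Matrix.det_fromBlocks_zero₂₁]
      simp [hdet]⟩

theorem blockIncl_one (ι κ : Type) [Fintype ι] [DecidableEq ι] [Fintype κ] [DecidableEq κ] :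
    blockIncl ι κ 1 = 1 := by
  apply Subtype.ext
  simp [blockIncl, Matrix.fromBlocks_one]

theorem blockIncl_continuous (ι κ : Type) [Fintype ι] [DecidableEq ι] [Fintype κ]
    [DecidableEq κ] : Continuous (blockIncl ι κ) := by
  apply Continuous.subtype_mk
  exact Continuous.matrix_fromBlocks continuous_subtype_val continuous_const continuous_const
    continuous_const

/-- The block inclusion as a continuous map. -/
def blockInclMap (ι κ : Type) [Fintype ι] [DecidableEq ι] [Fintype κ] [DecidableEq κ] :
    C(SOg ι, SOg (ι ⊕ κ)) :=
  ⟨blockIncl ι κ, blockIncl_continuous ι κ⟩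

/-- The map induced on homotopy groups by a based continuous map. -/
def piMap {X Y : Type} [TopologicalSpace X] [TopologicalSpace Y] (N : Type)
    (f : C(X, Y)) {x : X} {y : Y} (hxy : f x = y) :
    HomotopyGroup N X x → HomotopyGroup N Y y :=
  Quotient.map
    (fun p => ⟨f.comp p.1, fun c hc => by
      simp only [ContinuousMap.comp_apply]
      rw [p.2 c hc, hxy]⟩)
    (fun p q h => h.elim fun H => ⟨H.compContinuousMap f⟩)

/-- The boundary `∂(D^n × D^m) = (S^{n-1} × D^m) ∪ (D^n × S^{m-1})` of a product of discs. -/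
abbrev Bd (n m : ℕ) : Type :=
  {p : Disc n × Disc m // ‖(p.1.1 : EuclideanSpace ℝ (Fin n))‖ = 1 ∨
    ‖(p.2.1 : EuclideanSpace ℝ (Fin m))‖ = 1}

/-- The wedge `X ∨ Y` of two pointed spaces. -/
abbrev Wedge (X Y : Type) [TopologicalSpace X] [TopologicalSpace Y] (x0 : X) (y0 : Y) : Type :=
  Quot (fun z w : X ⊕ Y => z = Sum.inl x0 ∧ w = Sum.inr y0)

namespace GyrAux9

/-- Product in the unit interval, as an explicit function. -/
def mulI (s t : I) : I := ⟨s.1 * t.1, unitInterval.mul_mem s.2 t.2⟩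

@[simp] lemma mulI_zero (t : I) : mulI 0 t = 0 := Subtype.ext (zero_mul _)
@[simp] lemma mulI_one (t : I) : mulI 1 t = t := Subtype.ext (one_mul _)

lemma continuous_mulI : Continuous fun p : I × I => mulI p.1 p.2 := by
  apply Continuous.subtype_mk; fun_prop

/-- Convex combination `(1-s)*t + s*u` in the unit interval. -/
def combo (s t u : I) : I :=
  ⟨(1 - s.1) * t.1 + s.1 * u.1, by
    constructor <;> nlinarith [s.2.1, s.2.2, t.2.1, t.2.2, u.2.1, u.2.2]⟩

@[simp] lemma combo_zero (t u : I) : combo 0 t u = t := Subtype.ext (by simp [combo])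
@[simp] lemma combo_one (t u : I) : combo 1 t u = u := Subtype.ext (by simp [combo])
@[simp] lemma combo_same (s t : I) : combo s t t = t := Subtype.ext (by simp [combo]; ring)

lemma continuous_combo : Continuous fun p : (I × I) × I => combo p.1.1 p.1.2 p.2 := by
  apply Continuous.subtype_mk; fun_prop

variable {A B X : Type} [TopologicalSpace A] [TopologicalSpace B] [TopologicalSpace X]

/-- The standard homotopy deforming `B × I` along a retraction-type map `r`. -/
def defo (r : C(B × I, B × I)) : C((B × I) × I, B × I) :=
  ⟨fun p => ((r (p.1.1, mulI p.2 p.1.2)).1, combo p.2 p.1.2 (r p.1).2), by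
    apply Continuous.prodMk
    · exact continuous_fst.comp (r.continuous.comp
        ((continuous_fst.comp continuous_fst).prodMk
          (continuous_mulI.comp (continuous_snd.prodMk
            (continuous_snd.comp continuous_fst)))))
    · exact continuous_combo.comp ((continuous_snd.prodMk
        (continuous_snd.comp continuous_fst)).prodMk
        (continuous_snd.comp (r.continuous.comp continuous_fst)))⟩

lemma defo_zero (r : C(B × I, B × I)) (h0 : ∀ b, r (b, 0) = (b, 0)) (bt : B × I) :
    defo r (bt, 0) = bt := by
  simp only [defo, ContinuousMap.coe_mk, mulI_zero, combo_zero, h0 bt.1]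

lemma defo_one (r : C(B × I, B × I)) (bt : B × I) : defo r (bt, 1) = r bt := by
  simp only [defo, ContinuousMap.coe_mk, mulI_one, combo_one]

lemma defo_fix (r : C(B × I, B × I)) (b : B) (hfix : ∀ u, r (b, u) = (b, u)) (t s : I) :
    defo r ((b, t), s) = (b, t) := by
  simp only [defo, ContinuousMap.coe_mk, hfix, combo_same]

/-- The inclusion of the `0`-end of the double mapping cylinder is a homotopy
equivalence, when `i` is a cofibration. -/
lemma cyl_equiv (i : C(A, B)) (hi : IsCofibration i) (F : C(A × I, X)) (g : C(A, X))
    (hg : ∀ a, F (a, 0) = g a) :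
    Nonempty ((Pushout ⇑g ⇑i) ≃ₕ
      Pushout ⇑F (fun p : A × I => ((i p.1 : B), p.2))) := by
  classical
  set fZ : A × I → X := ⇑F with hfZ
  set gZ : A × I → B × I := fun p => ((i p.1 : B), p.2) with hgZ
  -- the mapping cylinder M = B ∪_{A×{0}} (A × I)
  obtain ⟨K, hK0, hK⟩ := hi (Pushout (fun a : A => ((a, (0 : I)) : A × I)) ⇑i)
    ⟨fun b => Pushout.inr _ _ b, continuous_quot_mk.comp continuous_inr⟩
    ⟨fun p => Pushout.inl _ _ p, continuous_quot_mk.comp continuous_inl⟩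
    (fun a => Quot.sound ⟨a, rfl, rfl⟩)
  -- the projection M → B × I
  let pM : C(Pushout (fun a : A => ((a, (0 : I)) : A × I)) ⇑i, B × I) :=
    ⟨Quot.lift (Sum.elim gZ (fun b => (b, 0)))
      (by rintro z w ⟨a, rfl, rfl⟩; rfl),
      continuous_quot_lift _ (Continuous.sumElim (by fun_prop) (by fun_prop))⟩
  -- the map M → B ∪_g X
  let lM : C(Pushout (fun a : A => ((a, (0 : I)) : A × I)) ⇑i, Pushout ⇑g ⇑i) :=
    ⟨Quot.lift (Sum.elim (fun q : A × I => Pushout.inl ⇑g ⇑i (F q))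
        (fun b => Pushout.inr ⇑g ⇑i b))
      (by
        rintro z w ⟨a, rfl, rfl⟩
        show Pushout.inl ⇑g ⇑i (F (a, 0)) = Pushout.inr ⇑g ⇑i (i a)
        rw [show F (a, 0) = g a from hg a]
        exact Quot.sound ⟨a, rfl, rfl⟩),
      continuous_quot_lift _ (Continuous.sumElim
        ((continuous_quot_mk.comp continuous_inl).comp F.continuous)
        (continuous_quot_mk.comp continuous_inr))⟩
  -- the end inclusion j : B ∪_g X → Z
  let j : C(Pushout ⇑g ⇑i, Pushout fZ gZ) :=
    ⟨Quot.lift (Sum.elim (fun x => Pushout.inl fZ gZ x)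
        (fun b => Pushout.inr fZ gZ (b, 0)))
      (by
        rintro z w ⟨a, rfl, rfl⟩
        show Pushout.inl fZ gZ (g a) = Pushout.inr fZ gZ (i a, 0)
        rw [← show F (a, 0) = g a from hg a]
        exact Quot.sound ⟨(a, 0), rfl, rfl⟩),
      continuous_quot_lift _ (Continuous.sumElim
        (continuous_quot_mk.comp continuous_inl)
        ((continuous_quot_mk.comp continuous_inr).comp (by fun_prop)))⟩
  -- the retraction q : Z → B ∪_g X
  let q : C(Pushout fZ gZ, Pushout ⇑g ⇑i) :=
    ⟨Quot.lift (Sum.elim (fun x => Pushout.inl ⇑g ⇑i x) (fun bt => lM (K bt)))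
      (by
        rintro z w ⟨p, rfl, rfl⟩
        show Pushout.inl ⇑g ⇑i (F p) = lM (K (i p.1, p.2))
        rw [hK p.1 p.2]
        rfl),
      continuous_quot_lift _ (Continuous.sumElim
        (continuous_quot_mk.comp continuous_inl)
        (lM.continuous.comp K.continuous))⟩
  -- r = pM ∘ K : B × I → B × I
  let r : C(B × I, B × I) := pM.comp K
  -- single-step application lemmas
  have einlM : ∀ p : A × I,
      Pushout.inl (fun a : A => ((a, (0 : I)) : A × I)) ⇑i p = Quot.mk _ (Sum.inl p) :=
    fun _ => rfl
  have einrM : ∀ b : B,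
      Pushout.inr (fun a : A => ((a, (0 : I)) : A × I)) ⇑i b = Quot.mk _ (Sum.inr b) :=
    fun _ => rfl
  have einlP : ∀ x : X, Pushout.inl ⇑g ⇑i x = Quot.mk _ (Sum.inl x) := fun _ => rfl
  have einrP : ∀ b : B, Pushout.inr ⇑g ⇑i b = Quot.mk _ (Sum.inr b) := fun _ => rfl
  have einlZ : ∀ x : X, Pushout.inl fZ gZ x = Quot.mk _ (Sum.inl x) := fun _ => rfl
  have einrZ : ∀ bt : B × I, Pushout.inr fZ gZ bt = Quot.mk _ (Sum.inr bt) := fun _ => rfl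
  have hpM_inl : ∀ p : A × I, pM (Quot.mk _ (Sum.inl p)) = gZ p := fun _ => rfl
  have hpM_inr : ∀ b : B, pM (Quot.mk _ (Sum.inr b)) = (b, 0) := fun _ => rfl
  have hlM_inl : ∀ p : A × I, lM (Quot.mk _ (Sum.inl p)) = Pushout.inl ⇑g ⇑i (F p) :=
    fun _ => rfl
  have hlM_inr : ∀ b : B, lM (Quot.mk _ (Sum.inr b)) = Pushout.inr ⇑g ⇑i b := fun _ => rfl
  have hj_inl : ∀ x : X, j (Quot.mk _ (Sum.inl x)) = Pushout.inl fZ gZ x := fun _ => rfl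
  have hj_inr : ∀ b : B, j (Quot.mk _ (Sum.inr b)) = Pushout.inr fZ gZ (b, 0) := fun _ => rfl
  have hq_inl : ∀ x : X, q (Quot.mk _ (Sum.inl x)) = Pushout.inl ⇑g ⇑i x := fun _ => rfl
  have hq_inr : ∀ bt : B × I, q (Quot.mk _ (Sum.inr bt)) = lM (K bt) := fun _ => rfl
  have hr : ∀ bt : B × I, r bt = pM (K bt) := fun _ => rfl
  have hr0 : ∀ b, r (b, 0) = (b, 0) := by
    intro b
    rw [hr, hK0 b]
    show pM (Pushout.inr (fun a : A => ((a, (0 : I)) : A × I)) ⇑i b) = (b, 0)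
    rw [einrM, hpM_inr]
  have hra : ∀ a u, r (i a, u) = (i a, u) := by
    intro a u
    rw [hr, hK a u]
    show pM (Pushout.inl (fun a : A => ((a, (0 : I)) : A × I)) ⇑i (a, u)) = (i a, u)
    rw [einlM, hpM_inl]
  -- key compatibility: j ∘ lM = inr ∘ pM
  have hjl : ∀ m, j (lM m) = Pushout.inr fZ gZ (pM m) := by
    apply Quot.ind
    rintro (⟨a, u⟩ | b)
    · rw [hlM_inl (a, u), hpM_inl (a, u), einlP, hj_inl, einlZ, einrZ]
      exact Quot.sound ⟨(a, u), rfl, rfl⟩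
    · rw [hlM_inr b, hpM_inr b, einrP, hj_inr, einrZ]
  -- the homotopy from id to j ∘ q, curried
  let GX : C(X, C(I, Pushout fZ gZ)) :=
    ContinuousMap.curry ⟨fun p : X × I => Pushout.inl fZ gZ p.1,
      (continuous_quot_mk.comp continuous_inl).comp continuous_fst⟩
  let GB : C(B × I, C(I, Pushout fZ gZ)) :=
    ContinuousMap.curry ⟨fun p : (B × I) × I => Pushout.inr fZ gZ (defo r p),
      (continuous_quot_mk.comp continuous_inr).comp (defo r).continuous⟩
  have hGX : ∀ (x : X) (s : I), GX x s = Pushout.inl fZ gZ x := fun _ _ => rfl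
  have hGB : ∀ (bt : B × I) (s : I), GB bt s = Pushout.inr fZ gZ (defo r (bt, s)) :=
    fun _ _ => rfl
  let G : C(Pushout fZ gZ, C(I, Pushout fZ gZ)) :=
    ⟨Quot.lift (Sum.elim ⇑GX ⇑GB)
      (by
        rintro z w ⟨a, rfl, rfl⟩
        show GX (F a) = GB (i a.1, a.2)
        ext s
        rw [hGX, hGB, defo_fix r (i a.1) (hra a.1) a.2 s, einlZ, einrZ]
        exact Quot.sound ⟨a, rfl, rfl⟩),
      continuous_quot_lift _ (Continuous.sumElim GX.continuous GB.continuous)⟩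
  have hG_inl : ∀ x : X, G (Quot.mk _ (Sum.inl x)) = GX x := fun _ => rfl
  have hG_inr : ∀ bt : B × I, G (Quot.mk _ (Sum.inr bt)) = GB bt := fun _ => rfl
  have hjq : q.comp j = ContinuousMap.id _ := by
    apply ContinuousMap.ext
    apply Quot.ind
    rintro (x | b)
    · show q (j (Quot.mk _ (Sum.inl x))) = Quot.mk _ (Sum.inl x)
      rw [hj_inl, einlZ, hq_inl, einlP]
    · show q (j (Quot.mk _ (Sum.inr b))) = Quot.mk _ (Sum.inr b)
      rw [hj_inr, einrZ, hq_inr, hK0 b]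
      show lM (Pushout.inr (fun a : A => ((a, (0 : I)) : A × I)) ⇑i b) = Quot.mk _ (Sum.inr b)
      rw [einrM, hlM_inr, einrP]
  refine ⟨⟨j, q, ?_, ?_⟩⟩
  · rw [hjq]
  · -- j ∘ q ≃ id via G
    refine ⟨(ContinuousMap.Homotopy.symm ?_)⟩
    refine ⟨⟨fun p => G p.2 p.1, ?_⟩, ?_, ?_⟩
    · exact (ContinuousMap.uncurry G).continuous.comp
        (continuous_snd.prodMk continuous_fst)
    · -- at 0 : identity
      apply Quot.ind
      rintro (x | bt)
      · show G (Quot.mk _ (Sum.inl x)) 0 = ContinuousMap.id _ (Quot.mk _ (Sum.inl x))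
        rw [hG_inl, hGX, ContinuousMap.id_apply, einlZ]
      · show G (Quot.mk _ (Sum.inr bt)) 0 = ContinuousMap.id _ (Quot.mk _ (Sum.inr bt))
        rw [hG_inr, hGB, defo_zero r hr0 bt, ContinuousMap.id_apply, einrZ]
    · -- at 1 : j ∘ q
      apply Quot.ind
      rintro (x | bt)
      · show G (Quot.mk _ (Sum.inl x)) 1 = (j.comp q) (Quot.mk _ (Sum.inl x))
        rw [hG_inl, hGX, ContinuousMap.comp_apply, hq_inl, einlP, hj_inl]
      · show G (Quot.mk _ (Sum.inr bt)) 1 = j (q (Quot.mk _ (Sum.inr bt)))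
        rw [hG_inr, hGB, defo_one r bt, hr bt, hq_inr, hjl (K bt)]

end GyrAux9

/-- If `g, h : A → X` are homotopic and `i : A → B` is a cofibration, then the
pushouts `B ∪_g X` and `B ∪_h X` are homotopy equivalent. -/
theorem pushout_homotopic_attaching (A B X : Type) [TopologicalSpace A] [TopologicalSpace B]
    [TopologicalSpace X] (i : C(A, B)) (g h : C(A, X))
    (hgh : g.Homotopic h) (hi : IsCofibration i) :
    Nonempty (Pushout (⇑g) (⇑i) ≃ₕ Pushout (⇑h) (⇑i)) := by
  classical
  obtain ⟨F⟩ := hgh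
  let F₁ : C(A × I, X) := ⟨fun p => F (p.2, p.1),
    F.continuous.comp (continuous_snd.prodMk continuous_fst)⟩
  let F₂ : C(A × I, X) := ⟨fun p => F₁ (p.1, unitInterval.symm p.2),
    F₁.continuous.comp (continuous_fst.prodMk
      (unitInterval.continuous_symm.comp continuous_snd))⟩
  have hg1 : ∀ a, F₁ (a, 0) = g a := fun a => F.apply_zero a
  have hg2 : ∀ a, F₂ (a, 0) = h a := by
    intro a
    show F₁ (a, unitInterval.symm 0) = h a
    rw [unitInterval.symm_zero]
    exact F.apply_one a
  obtain ⟨e1⟩ := GyrAux9.cyl_equiv i hi F₁ g hg1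
  obtain ⟨e2⟩ := GyrAux9.cyl_equiv i hi F₂ h hg2
  set gZ : A × I → B × I := fun p => ((i p.1 : B), p.2) with hgZ
  -- the flip Z(F₂) → Z(F₁) and its inverse
  let tF : C(Pushout ⇑F₂ gZ, Pushout ⇑F₁ gZ) :=
    ⟨Quot.lift (Sum.elim (fun x => Pushout.inl ⇑F₁ gZ x)
        (fun bt => Pushout.inr ⇑F₁ gZ (bt.1, unitInterval.symm bt.2)))
      (by
        rintro z w ⟨a, rfl, rfl⟩
        show Pushout.inl ⇑F₁ gZ (F₂ a)
          = Pushout.inr ⇑F₁ gZ (i a.1, unitInterval.symm a.2)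
        exact Quot.sound ⟨(a.1, unitInterval.symm a.2), rfl, rfl⟩),
      continuous_quot_lift _ (Continuous.sumElim
        (continuous_quot_mk.comp continuous_inl)
        ((continuous_quot_mk.comp continuous_inr).comp
          (continuous_fst.prodMk (unitInterval.continuous_symm.comp continuous_snd))))⟩
  let iF : C(Pushout ⇑F₁ gZ, Pushout ⇑F₂ gZ) :=
    ⟨Quot.lift (Sum.elim (fun x => Pushout.inl ⇑F₂ gZ x)
        (fun bt => Pushout.inr ⇑F₂ gZ (bt.1, unitInterval.symm bt.2)))
      (by
        rintro z w ⟨a, rfl, rfl⟩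
        have key : F₂ (a.1, unitInterval.symm a.2) = F₁ a := by
          show F₁ (a.1, unitInterval.symm (unitInterval.symm a.2)) = F₁ a
          rw [unitInterval.symm_symm]
        show Pushout.inl ⇑F₂ gZ (F₁ a)
          = Pushout.inr ⇑F₂ gZ (i a.1, unitInterval.symm a.2)
        rw [← key]
        exact Quot.sound ⟨(a.1, unitInterval.symm a.2), rfl, rfl⟩),
      continuous_quot_lift _ (Continuous.sumElim
        (continuous_quot_mk.comp continuous_inl)
        ((continuous_quot_mk.comp continuous_inr).comp
          (continuous_fst.prodMk (unitInterval.continuous_symm.comp continuous_snd))))⟩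
  have e1inl : ∀ x : X, Pushout.inl ⇑F₁ gZ x = Quot.mk _ (Sum.inl x) := fun _ => rfl
  have e1inr : ∀ bt : B × I, Pushout.inr ⇑F₁ gZ bt = Quot.mk _ (Sum.inr bt) := fun _ => rfl
  have e2inl : ∀ x : X, Pushout.inl ⇑F₂ gZ x = Quot.mk _ (Sum.inl x) := fun _ => rfl
  have e2inr : ∀ bt : B × I, Pushout.inr ⇑F₂ gZ bt = Quot.mk _ (Sum.inr bt) := fun _ => rfl
  have htF_inl : ∀ x : X, tF (Quot.mk _ (Sum.inl x)) = Pushout.inl ⇑F₁ gZ x := fun _ => rfl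
  have htF_inr : ∀ bt : B × I,
      tF (Quot.mk _ (Sum.inr bt)) = Pushout.inr ⇑F₁ gZ (bt.1, unitInterval.symm bt.2) :=
    fun _ => rfl
  have hiF_inl : ∀ x : X, iF (Quot.mk _ (Sum.inl x)) = Pushout.inl ⇑F₂ gZ x := fun _ => rfl
  have hiF_inr : ∀ bt : B × I,
      iF (Quot.mk _ (Sum.inr bt)) = Pushout.inr ⇑F₂ gZ (bt.1, unitInterval.symm bt.2) :=
    fun _ => rfl
  have h1 : tF.comp iF = ContinuousMap.id _ := by
    apply ContinuousMap.ext
    apply Quot.ind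
    rintro (x | bt)
    · show tF (iF (Quot.mk _ (Sum.inl x))) = Quot.mk _ (Sum.inl x)
      rw [hiF_inl, e2inl, htF_inl, e1inl]
    · show tF (iF (Quot.mk _ (Sum.inr bt))) = Quot.mk _ (Sum.inr bt)
      rw [hiF_inr, e2inr, htF_inr]
      show Pushout.inr ⇑F₁ gZ (bt.1, unitInterval.symm (unitInterval.symm bt.2))
        = Quot.mk _ (Sum.inr bt)
      rw [unitInterval.symm_symm, e1inr]
  have h2 : iF.comp tF = ContinuousMap.id _ := by
    apply ContinuousMap.ext
    apply Quot.ind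
    rintro (x | bt)
    · show iF (tF (Quot.mk _ (Sum.inl x))) = Quot.mk _ (Sum.inl x)
      rw [htF_inl, e1inl, hiF_inl, e2inl]
    · show iF (tF (Quot.mk _ (Sum.inr bt))) = Quot.mk _ (Sum.inr bt)
      rw [htF_inr, e1inr, hiF_inr]
      show Pushout.inr ⇑F₂ gZ (bt.1, unitInterval.symm (unitInterval.symm bt.2))
        = Quot.mk _ (Sum.inr bt)
      rw [unitInterval.symm_symm, e2inr]
  have mid : Pushout ⇑F₁ gZ ≃ₕ Pushout ⇑F₂ gZ :=
    ⟨iF, tF, by rw [h1], by rw [h2]⟩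
  exact ⟨e1.trans (mid.trans e2.symm)⟩
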